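/- Define ρ(x) = sup_{y ≥ 0} (φ(xy) − ψ(y))/y for Young functions φ, ψ with ψ(y)/y → 0 as y → 0 and ψ(1) ≥ 1. Then ρ is a nondecreasing convex function on [0,∞) with values in [0,∞], ρ(0) = 0, and ρ(x) → ∞ as x → ∞ (i.e., ρ is a generalized Young function). -/

import Mathlib

open Filter Topology MeasureTheory
open scoped ENNReal
noncomputable section

/-- A Young function: strictly increasing, convex on `[0,∞)`, vanishing at `0`. -/
def IsYoung (f : ℝ → ℝ) : Prop :=
  StrictMonoOn f (Set.Ici 0) ∧ ConvexOn ℝ (Set.Ici 0) f ∧ f 0 = 0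

/-- Legendre transform of a real function (sup over `y ≥ 0`), `ℝ≥0∞`-valued. -/
def Leg (f : ℝ → ℝ) (x : ℝ) : ℝ≥0∞ :=
  ⨆ y : {y : ℝ // 0 ≤ y}, ENNReal.ofReal (x * y - f y)

/-- Legendre transform of an `ℝ≥0∞`-valued function. -/
def LegE (f : ℝ → ℝ≥0∞) (x : ℝ) : ℝ≥0∞ :=
  ⨆ y : {y : ℝ // 0 ≤ y}, (ENNReal.ofReal (x * y) - f y)

/-- Monotone extension of a real function on `[0,∞)` to `ℝ≥0∞` arguments. -/
def extE (f : ℝ → ℝ) (t : ℝ≥0∞) : ℝ≥0∞ :=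
  ⨆ s : {s : ℝ // 0 ≤ s ∧ ENNReal.ofReal s ≤ t}, ENNReal.ofReal (f s)

/-- Monotone extension of an `ℝ≥0∞`-valued function to `ℝ≥0∞` arguments. -/
def extLT (f : ℝ → ℝ≥0∞) (t : ℝ≥0∞) : ℝ≥0∞ :=
  ⨆ s : {s : ℝ // 0 ≤ s ∧ ENNReal.ofReal s ≤ t}, f s

/-- Generalized (right-continuous) inverse of an `ℝ≥0∞`-valued function. -/
def invE (g : ℝ → ℝ≥0∞) (t : ℝ≥0∞) : ℝ≥0∞ :=
  ⨅ s : {s : ℝ // 0 ≤ s ∧ t ≤ g s}, ENNReal.ofReal s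

/-- `ρ(x) = sup_{y ≥ 0} (φ(xy) - ψ(y))/y`. -/
def rhoSup (φ ψ : ℝ → ℝ) (x : ℝ) : ℝ≥0∞ :=
  ⨆ y : {y : ℝ // 0 ≤ y}, ENNReal.ofReal ((φ (x * y) - ψ y) / y)

/-- `ζ(x) = sup_{y ≥ 0} (φ(xy) - ψ(y)/y)`. -/
def zetaSup (φ ψ : ℝ → ℝ) (x : ℝ) : ℝ≥0∞ :=
  ⨆ y : {y : ℝ // 0 ≤ y}, ENNReal.ofReal (φ (x * y) - ψ y / y)

/-- Domination order on real functions: `f(x) ≤ C₁ g(C₂ x)` for large `x`. -/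
def DominR (f g : ℝ → ℝ) : Prop :=
  ∃ C₁ C₂ x₀ : ℝ, 0 < C₁ ∧ 0 < C₂ ∧ 0 < x₀ ∧ ∀ x ≥ x₀, f x ≤ C₁ * g (C₂ * x)

/-- Equivalence of real functions: mutual domination. -/
def EquivR (f g : ℝ → ℝ) : Prop := DominR f g ∧ DominR g f

/-- Domination order on `ℝ≥0∞`-valued functions. -/
def DominE (f g : ℝ → ℝ≥0∞) : Prop :=
  ∃ C₁ C₂ x₀ : ℝ, 0 < C₁ ∧ 0 < C₂ ∧ 0 < x₀ ∧
    ∀ x ≥ x₀, f x ≤ ENNReal.ofReal C₁ * g (C₂ * x)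

/-- Equivalence of `ℝ≥0∞`-valued functions: mutual domination. -/
def EquivE (f g : ℝ → ℝ≥0∞) : Prop := DominE f g ∧ DominE g f

/-- ρ is a generalized Young function: nondecreasing, convex, ρ(0) = 0, ρ(x) → ∞. -/
theorem stmt15 (φ ψ : ℝ → ℝ) (hφ : IsYoung φ) (hψ : IsYoung ψ)
    (hψ0 : Tendsto (fun y => ψ y / y) (nhdsWithin 0 (Set.Ioi 0)) (nhds 0))
    (hψ1 : 1 ≤ ψ 1) :
    rhoSup φ ψ 0 = 0 ∧
    (∀ x y : ℝ, 0 ≤ x → x ≤ y → rhoSup φ ψ x ≤ rhoSup φ ψ y) ∧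
    (∀ x y a b : ℝ, 0 ≤ x → 0 ≤ y → 0 ≤ a → 0 ≤ b → a + b = 1 →
      rhoSup φ ψ (a * x + b * y) ≤
        ENNReal.ofReal a * rhoSup φ ψ x + ENNReal.ofReal b * rhoSup φ ψ y) ∧
    Tendsto (rhoSup φ ψ) atTop (nhds ⊤) := by
  obtain ⟨hφm, hφc, hφ0⟩ := hφ
  obtain ⟨hψm, hψc, hψz⟩ := hψ
  have hψnn : ∀ y : ℝ, 0 ≤ y → 0 ≤ ψ y := by
    intro y hy
    rcases eq_or_lt_of_le hy with h | h
    · rw [← h, hψz]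
    · rw [← hψz]
      exact (hψm (Set.mem_Ici.mpr le_rfl) (Set.mem_Ici.mpr hy) h).le
  have hφmono : ∀ a b : ℝ, 0 ≤ a → a ≤ b → φ a ≤ φ b := by
    intro a b ha hab
    exact hφm.monotoneOn (Set.mem_Ici.mpr ha) (Set.mem_Ici.mpr (ha.trans hab)) hab
  refine ⟨?_, ?_, ?_, ?_⟩
  · refine le_antisymm (iSup_le ?_) zero_le
    rintro ⟨y, hy⟩
    simp only [zero_mul, hφ0]
    refine (ENNReal.ofReal_eq_zero.mpr ?_).le
    exact div_nonpos_of_nonpos_of_nonneg (by linarith [hψnn y hy]) hy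
  · intro x y hx hxy
    refine iSup_mono ?_
    rintro ⟨t, ht⟩
    show ENNReal.ofReal ((φ (x * t) - ψ t) / t) ≤ ENNReal.ofReal ((φ (y * t) - ψ t) / t)
    apply ENNReal.ofReal_le_ofReal
    rcases eq_or_lt_of_le ht with h | h
    · rw [← h]; simp
    · apply div_le_div_of_nonneg_right _ h.le
      have := hφmono (x * t) (y * t) (mul_nonneg hx ht) (mul_le_mul_of_nonneg_right hxy ht)
      linarith
  · intro x y a b hx hy ha hb hab
    apply iSup_le
    rintro ⟨t, ht⟩
    show ENNReal.ofReal ((φ ((a * x + b * y) * t) - ψ t) / t) ≤ _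
    rcases eq_or_lt_of_le ht with h0 | h0
    · rw [← h0]
      simp [hφ0, hψz]
    · have hxt : x * t ∈ Set.Ici (0:ℝ) := Set.mem_Ici.mpr (mul_nonneg hx h0.le)
      have hyt : y * t ∈ Set.Ici (0:ℝ) := Set.mem_Ici.mpr (mul_nonneg hy h0.le)
      have key : φ ((a * x + b * y) * t) ≤ a * φ (x * t) + b * φ (y * t) := by
        have h := hφc.2 hxt hyt ha hb hab
        simpa [smul_eq_mul, add_mul, mul_assoc] using h
      have hrw : a * φ (x * t) + b * φ (y * t) - ψ t
          = a * (φ (x * t) - ψ t) + b * (φ (y * t) - ψ t) := by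
        linear_combination (ψ t) * hab
      calc ENNReal.ofReal ((φ ((a * x + b * y) * t) - ψ t) / t)
          ≤ ENNReal.ofReal ((a * φ (x * t) + b * φ (y * t) - ψ t) / t) := by
            apply ENNReal.ofReal_le_ofReal
            apply div_le_div_of_nonneg_right _ h0.le
            linarith
        _ = ENNReal.ofReal (a * ((φ (x * t) - ψ t) / t) + b * ((φ (y * t) - ψ t) / t)) := by
            congr 1; linear_combination (ψ t / t) * hab
        _ ≤ ENNReal.ofReal (a * ((φ (x * t) - ψ t) / t))
            + ENNReal.ofReal (b * ((φ (y * t) - ψ t) / t)) := ENNReal.ofReal_add_le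
        _ = ENNReal.ofReal a * ENNReal.ofReal ((φ (x * t) - ψ t) / t)
            + ENNReal.ofReal b * ENNReal.ofReal ((φ (y * t) - ψ t) / t) := by
            rw [ENNReal.ofReal_mul ha, ENNReal.ofReal_mul hb]
        _ ≤ ENNReal.ofReal a * rhoSup φ ψ x + ENNReal.ofReal b * rhoSup φ ψ y := by
            gcongr
            · exact le_iSup (fun (u : {y : ℝ // 0 ≤ y}) => ENNReal.ofReal ((φ (x * u) - ψ u) / u)) ⟨t, ht⟩
            · exact le_iSup (fun (u : {y : ℝ // 0 ≤ y}) => ENNReal.ofReal ((φ (y * u) - ψ u) / u)) ⟨t, ht⟩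
  · have hφ1 : 0 < φ 1 := by
      have := hφm (Set.mem_Ici.mpr le_rfl) (Set.mem_Ici.mpr zero_le_one) one_pos
      rw [hφ0] at this; exact this
    rw [ENNReal.tendsto_nhds_top_iff_nat]
    intro n
    filter_upwards [eventually_ge_atTop (max 1 (((n : ℝ) + 1 + ψ 1) / φ 1))] with x hx
    have hx1 : (1:ℝ) ≤ x := le_trans (le_max_left _ _) hx
    have hx0 : (0:ℝ) < x := lt_of_lt_of_le one_pos hx1
    have h2 : ((n : ℝ) + 1 + ψ 1) / φ 1 ≤ x := le_trans (le_max_right _ _) hx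
    have h3 : (n : ℝ) + 1 + ψ 1 ≤ φ 1 * x := by
      rw [mul_comm]
      exact (div_le_iff₀ hφ1).mp h2
    have h4 : φ 1 * x ≤ φ x := by
      have hmem0 : (0:ℝ) ∈ Set.Ici (0:ℝ) := Set.mem_Ici.mpr le_rfl
      have hmemx : x ∈ Set.Ici (0:ℝ) := Set.mem_Ici.mpr hx0.le
      have ha : (0:ℝ) ≤ 1 - 1 / x := by
        have : 1 / x ≤ 1 := by
          rw [div_le_one hx0]; exact hx1
        linarith
      have hb : (0:ℝ) ≤ 1 / x := by positivity
      have hcomb := hφc.2 hmem0 hmemx ha hb (by ring)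
      have heq : (1 - 1 / x) * (0:ℝ) + (1 / x) * x = 1 := by
        field_simp
        ring
      rw [smul_eq_mul, smul_eq_mul, smul_eq_mul, heq, hφ0, mul_zero, zero_add] at hcomb
      refine (le_div_iff₀ hx0).mp ?_
      calc φ 1 ≤ 1 / x * φ x := hcomb
        _ = φ x / x := by ring
    have h5 : (n : ℝ) + 1 ≤ φ x - ψ 1 := by linarith
    have h6 : ENNReal.ofReal ((n : ℝ) + 1) ≤ rhoSup φ ψ x := by
      refine le_trans ?_ (le_iSup (fun (u : {y : ℝ // 0 ≤ y}) =>
        ENNReal.ofReal ((φ (x * u) - ψ u) / u)) ⟨1, zero_le_one⟩)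
      apply ENNReal.ofReal_le_ofReal
      simpa using h5
    calc (n : ℝ≥0∞) = ENNReal.ofReal n := (ENNReal.ofReal_natCast n).symm
      _ < ENNReal.ofReal ((n : ℝ) + 1) := by
          apply (ENNReal.ofReal_lt_ofReal_iff (by positivity)).mpr
          linarith
      _ ≤ rhoSup φ ψ x := h6
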